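/- arXiv:1410.3291 — 4 statements merged into one kernel-verified Lean document; each statement's English description precedes it below -/
import Mathlib

section
/- Let $k \geq 2$ be an integer, and let $\Lambda > 0$, $a_0 \geq \Lambda$ be reals. Define the sequence $\hat{a}_0 = a_0$ and $\hat{a}_{t+1} = a_0 + \frac{(\hat{a}_t/\Lambda)^k}{k}\Lambda$. Then for all $t \geq 0$, $\hat{a}_{t+1}/\hat{a}_t \geq (a_0/((1-1/k)\Lambda))^{(k-1)/k}$. -/
lemma amgm_key (k : ℕ) (hk : 2 ≤ k) (c x : ℝ) (hc : 0 < c) (hx : 0 < x) :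
    (c * k / ((k:ℝ) - 1)) ^ (((k:ℝ) - 1) / k) ≤ c / x + (x ^ (k - 1)) / k := by
  have hK0 : (0:ℝ) < k := by positivity
  have hK2 : (2:ℝ) ≤ (k:ℝ) := by exact_mod_cast hk
  have hKm1 : (0:ℝ) < (k:ℝ) - 1 := by linarith
  set w₁ : ℝ := ((k:ℝ) - 1) / k with hw₁
  set w₂ : ℝ := 1 / k with hw₂
  set p₁ : ℝ := c * k / (((k:ℝ) - 1) * x) with hp₁
  set p₂ : ℝ := x ^ (k - 1) with hp₂
  have hp₁pos : 0 < p₁ := by positivity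
  have hp₂pos : 0 < p₂ := by positivity
  have h := Real.geom_mean_le_arith_mean2_weighted
    (by positivity : (0:ℝ) ≤ w₁) (by positivity : (0:ℝ) ≤ w₂)
    hp₁pos.le hp₂pos.le (by rw [hw₁, hw₂, ← add_div, sub_add_cancel, div_self hK0.ne'])
  have hL : p₁ ^ w₁ * p₂ ^ w₂ = (c * k / ((k:ℝ) - 1)) ^ w₁ := by
    have e1 : p₁ = (c * k / ((k:ℝ) - 1)) * x⁻¹ := by rw [hp₁]; field_simp
    have e2 : ((k:ℝ) - 1) = ((k - 1 : ℕ) : ℝ) := by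
      have : (1:ℕ) ≤ k := by omega
      push_cast [this]; ring
    rw [e1, Real.mul_rpow (by positivity) (by positivity),
      Real.inv_rpow hx.le, hp₂, ← Real.rpow_natCast x (k-1), ← Real.rpow_mul hx.le]
    rw [mul_assoc, hw₂, ← e2]
    rw [← Real.rpow_neg hx.le, ← Real.rpow_add hx]
    have : -w₁ + ((k:ℝ) - 1) * (1 / k) = 0 := by rw [hw₁]; ring
    rw [this, Real.rpow_zero, mul_one]
  have hR : w₁ * p₁ + w₂ * p₂ = c / x + (x ^ (k - 1)) / k := by
    rw [hw₁, hw₂, hp₁, hp₂]; field_simp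
  rw [hL, hR] at h
  exact h

theorem stmt_0 (k : ℕ) (hk : 2 ≤ k) (Λ a₀ : ℝ) (hΛ : 0 < Λ) (ha₀ : Λ ≤ a₀)
    (a : ℕ → ℝ) (h0 : a 0 = a₀)
    (hrec : ∀ t, a (t + 1) = a₀ + (a t / Λ) ^ k / k * Λ) :
    ∀ t : ℕ, a (t + 1) / a t ≥ (a₀ / ((1 - 1 / (k : ℝ)) * Λ)) ^ (((k : ℝ) - 1) / k) := by
  have hK0 : (0:ℝ) < k := by positivity
  have hK2 : (2:ℝ) ≤ (k:ℝ) := by exact_mod_cast hk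
  have hKm1 : (0:ℝ) < (k:ℝ) - 1 := by linarith
  have ha₀pos : 0 < a₀ := lt_of_lt_of_le hΛ ha₀
  have hpos : ∀ t, 0 < a t := by
    intro t
    induction t with
    | zero => rw [h0]; exact ha₀pos
    | succ n ih =>
      rw [hrec n]
      have hxn : 0 ≤ a n / Λ := le_of_lt (div_pos ih hΛ)
      have : 0 ≤ (a n / Λ) ^ k / k * Λ :=
        mul_nonneg (div_nonneg (pow_nonneg hxn k) hK0.le) hΛ.le
      linarith
  intro t
  set x : ℝ := a t / Λ with hx
  have hxpos : 0 < x := div_pos (hpos t) hΛ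
  have hc : 0 < a₀ / Λ := div_pos ha₀pos hΛ
  have hbase : a₀ / ((1 - 1 / (k:ℝ)) * Λ) = (a₀ / Λ) * k / ((k:ℝ) - 1) := by
    field_simp
  have hratio : a (t + 1) / a t = (a₀ / Λ) / x + (x ^ (k - 1)) / k := by
    rw [hrec t, ← hx]
    have hat : a t = x * Λ := by rw [hx]; field_simp
    rw [hat]
    have hxk : x ^ k = x ^ (k - 1) * x := by
      rw [← pow_succ]
      congr 1
      omega
    rw [hxk]
    field_simp
  rw [hratio, hbase, ge_iff_le]
  exact amgm_key k hk (a₀ / Λ) x hc hxpos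
end

section
/- Let $k \geq 2$ be an integer and $\Lambda > 0$. Let $(\hat{a}_t)$ and $(\hat{b}_t)$ satisfy the same recursion $u_{t+1} = u_0 + (u_t/\Lambda)^k \Lambda/k$ with initial values $\hat{a}_0 > 1$ and $\hat{b}_0 = \hat{a}_0 - 1$ (more generally $\hat{b}_0 \geq \hat{a}_0 - 1$, $\hat{b}_0 \le \hat a_0$). Then for all $t \geq 0$, $\hat{b}_t / \hat{a}_t \geq (1 - 1/\hat{a}_0)^{k^t}$. -/
theorem stmt_3 (k : ℕ) (hk : 2 ≤ k) (Λ : ℝ) (hΛ : 0 < Λ)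
    (a b : ℕ → ℝ)
    (hareca : ∀ t, a (t + 1) = a 0 + (a t / Λ) ^ k * Λ / k)
    (harecb : ∀ t, b (t + 1) = b 0 + (b t / Λ) ^ k * Λ / k)
    (ha0 : 1 < a 0) (hb0l : a 0 - 1 ≤ b 0) (hb0u : b 0 ≤ a 0) :
    ∀ t : ℕ, b t / a t ≥ (1 - 1 / a 0) ^ (k ^ t) := by
  set c := 1 - 1 / a 0 with hc
  have ha0' : (0:ℝ) < a 0 := by linarith
  have hc0 : 0 < c := by
    have h1 : 1 / a 0 < 1 := by rw [div_lt_one ha0']; linarith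
    simp only [hc]; linarith
  have hc1 : c ≤ 1 := by
    have : 0 < 1 / a 0 := by positivity
    simp only [hc]; linarith
  have hca0 : c * a 0 = a 0 - 1 := by
    rw [hc, sub_mul, one_div, inv_mul_cancel₀ ha0'.ne', one_mul]
  have hkR : (0:ℝ) < (k:ℝ) := by positivity
  have key : ∀ t, 0 < a t ∧ c ^ (k ^ t) * a t ≤ b t := by
    intro t
    induction t with
    | zero =>
      refine ⟨ha0', ?_⟩
      simp only [pow_zero, pow_one]
      linarith
    | succ t ih =>
      obtain ⟨hat, hbt⟩ := ih
      have hbt0 : 0 ≤ b t := le_trans (by positivity) hbt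
      have hpos : (0:ℝ) ≤ (a t / Λ) ^ k * Λ / k := by positivity
      refine ⟨by rw [hareca]; linarith, ?_⟩
      rw [hareca, harecb]
      have hle1 : c ^ (k ^ (t + 1)) ≤ c := by
        calc c ^ (k ^ (t + 1)) ≤ c ^ 1 :=
              pow_le_pow_of_le_one hc0.le hc1 (Nat.one_le_iff_ne_zero.mpr (by positivity))
          _ = c := pow_one c
      have h1 : c ^ (k ^ (t + 1)) * a 0 ≤ b 0 := by
        have := mul_le_mul_of_nonneg_right hle1 ha0'.le
        linarith
      have h2 : c ^ (k ^ (t + 1)) * ((a t / Λ) ^ k * Λ / k) ≤ (b t / Λ) ^ k * Λ / k := by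
        have hd : c ^ (k ^ t) * a t / Λ ≤ b t / Λ :=
          by gcongr
        have hdnn : 0 ≤ c ^ (k ^ t) * a t / Λ := by positivity
        have hpow : (c ^ (k ^ t) * a t / Λ) ^ k ≤ (b t / Λ) ^ k :=
          pow_le_pow_left₀ hdnn hd k
        have heq : (c ^ (k ^ t) * a t / Λ) ^ k = c ^ (k ^ (t + 1)) * (a t / Λ) ^ k := by
          rw [mul_div_assoc, mul_pow, ← pow_mul, pow_succ]
        rw [heq] at hpow
        have := mul_le_mul_of_nonneg_right hpow (le_of_lt (div_pos hΛ hkR))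
        calc c ^ (k ^ (t + 1)) * ((a t / Λ) ^ k * Λ / k)
            = c ^ (k ^ (t + 1)) * (a t / Λ) ^ k * (Λ / k) := by ring
          _ ≤ (b t / Λ) ^ k * (Λ / k) := this
          _ = (b t / Λ) ^ k * Λ / k := by ring
      calc c ^ (k ^ (t + 1)) * (a 0 + (a t / Λ) ^ k * Λ / k)
          = c ^ (k ^ (t + 1)) * a 0 + c ^ (k ^ (t + 1)) * ((a t / Λ) ^ k * Λ / k) := by ring
        _ ≤ b 0 + (b t / Λ) ^ k * Λ / k := add_le_add h1 h2
  intro t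
  obtain ⟨hat, hbt⟩ := key t
  rw [ge_iff_le, le_div_iff₀ hat]
  linarith [hbt]
end

section
/- Let $k \geq 2$, $\Lambda > 0$, $C_1 \geq 1$, and $c_0 \geq 2$. Let $(\hat{a}_t)$ and $(\hat{b}_t)$ satisfy the recursion $u_{t+1} = u_0 + (u_t/\Lambda)^k \Lambda / k$ with $\hat{a}_0 = C_1 \Lambda$ and $\hat{b}_0 = c_0 C_1 \Lambda$. Write $c_t = \hat{b}_t / \hat{a}_t$ and $x_t = \hat{a}_t/\Lambda$. Then for all $t \geq 0$: $c_{t+1} \geq c_t^k \left(1 - \frac{C_1}{C_1 + x_t^k/k}\right)$. -/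
theorem stmt_4 (k : ℕ) (hk : 2 ≤ k) (Λ C₁ c₀ : ℝ) (hΛ : 0 < Λ) (hC₁ : 1 ≤ C₁) (hc₀ : 2 ≤ c₀)
    (a b : ℕ → ℝ)
    (hareca : ∀ t, a (t + 1) = a 0 + (a t / Λ) ^ k * Λ / k)
    (harecb : ∀ t, b (t + 1) = b 0 + (b t / Λ) ^ k * Λ / k)
    (ha0 : a 0 = C₁ * Λ) (hb0 : b 0 = c₀ * C₁ * Λ) :
    ∀ t : ℕ, b (t + 1) / a (t + 1) ≥ (b t / a t) ^ k * (1 - C₁ / (C₁ + (a t / Λ) ^ k / k)) := by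
  have hkR : (0:ℝ) < k := by
    exact_mod_cast Nat.lt_of_lt_of_le (by norm_num) hk
  have hC₁0 : (0:ℝ) < C₁ := lt_of_lt_of_le one_pos hC₁
  have hapos : ∀ t, 0 < a t := by
    intro t
    induction t with
    | zero => rw [ha0]; positivity
    | succ n ih =>
      rw [hareca, ha0]
      have h1 : 0 < (a n / Λ) ^ k := pow_pos (div_pos ih hΛ) k
      positivity
  have hbpos : ∀ t, 0 < b t := by
    intro t
    induction t with
    | zero => rw [hb0]; positivity
    | succ n ih =>
      rw [harecb, hb0]
      have h1 : 0 < (b n / Λ) ^ k := pow_pos (div_pos ih hΛ) k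
      positivity
  intro t
  set x := a t / Λ with hxdef
  have hx : 0 < x := div_pos (hapos t) hΛ
  set c := b t / a t with hcdef
  have hc : 0 < c := div_pos (hbpos t) (hapos t)
  have hat := (hapos t).ne'
  have hΛne := hΛ.ne'
  have hbt : b t / Λ = c * x := by
    rw [hcdef, hxdef]
    field_simp
  have hxk : 0 < x ^ k := pow_pos hx k
  have hck : 0 < c ^ k := pow_pos hc k
  have hD : 0 < C₁ + x ^ k / k := by positivity
  have haeq : a (t + 1) = (C₁ + x ^ k / k) * Λ := by
    rw [hareca, ha0]; ring
  have hbeq : b (t + 1) = (c₀ * C₁ + c ^ k * x ^ k / k) * Λ := by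
    rw [harecb, hb0, hbt, mul_pow]; ring
  rw [haeq, hbeq, ge_iff_le]
  rw [mul_div_mul_right _ _ (ne_of_gt hΛ)]
  rw [le_div_iff₀ hD]
  have h1 : 1 - C₁ / (C₁ + x ^ k / k) = (x ^ k / k) / (C₁ + x ^ k / k) := by
    field_simp
    ring
  rw [h1]
  have : c ^ k * (x ^ k / k / (C₁ + x ^ k / k)) * (C₁ + x ^ k / k)
      = c ^ k * (x ^ k / k) := by
    field_simp
  rw [this, mul_div_assoc]
  nlinarith [mul_pos hC₁0 (lt_of_lt_of_le two_pos hc₀)]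
end

section
/- Let $W \sim \mathrm{Bin}(n, p)$ be a binomial random variable with $np \leq 1/2$. Then for every integer $b \geq 0$, $\Pr[W \geq b] \leq (1 + 2np) \Pr[W = b]$. -/
open Finset in
theorem stmt_6 (n : ℕ) (p : ℝ) (hp0 : 0 ≤ p) (hp1 : p ≤ 1) (hmean : (n : ℝ) * p ≤ 1 / 2)
    (b : ℕ) :
    ∑ j ∈ Finset.Icc b n, (n.choose j : ℝ) * p ^ j * (1 - p) ^ (n - j) ≤
      (1 + 2 * n * p) * ((n.choose b : ℝ) * p ^ b * (1 - p) ^ (n - b)) := by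
  have h1p : 0 ≤ 1 - p := by linarith
  set f : ℕ → ℝ := fun j => (n.choose j : ℝ) * p ^ j * (1 - p) ^ (n - j) with hf
  have hfnn : ∀ j, 0 ≤ f j := fun j => by
    have : (0:ℝ) ≤ (n.choose j : ℝ) := Nat.cast_nonneg _
    positivity
  have hnp0 : 0 ≤ (n:ℝ) * p := by positivity
  rcases Nat.eq_zero_or_pos b with rfl | hb
  · -- b = 0 : total mass 1, Bernoulli
    have hsum : ∑ j ∈ Finset.Icc 0 n, f j = 1 := by
      have hr : Finset.Icc 0 n = Finset.range (n+1) := by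
        ext x; simp [Nat.lt_succ_iff]
      have := add_pow p (1-p) n
      simp only [add_sub_cancel, one_pow] at this
      rw [hr, this]
      exact Finset.sum_congr rfl fun x _ => by ring
    rw [hsum]
    -- goal: 1 ≤ (1+2np) * f 0
    have hbern : 1 - (n:ℝ) * p ≤ (1 - p) ^ n := by
      have := one_add_mul_le_pow (a := -p) (by linarith) n
      simpa [sub_eq_add_neg, mul_comm] using this
    have hf0 : f 0 = (1 - p) ^ n := by simp [hf]
    simp only [Nat.choose_zero_right, Nat.cast_one, pow_zero, Nat.sub_zero, one_mul, mul_one]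
    nlinarith [pow_nonneg h1p n]
  · -- b ≥ 1
    by_cases hbn : b ≤ n
    swap
    · rw [Finset.Icc_eq_empty (by omega)]
      simp only [Finset.sum_empty]
      have : 0 ≤ 1 + 2 * (n:ℝ) * p := by linarith
      exact mul_nonneg this (hfnn b)
    have hn1 : 1 ≤ n := le_trans hb hbn
    have hph : p ≤ 1/2 := by
      have : (1:ℝ) ≤ n := by exact_mod_cast hn1
      nlinarith
    have h1p' : (1:ℝ)/2 ≤ 1 - p := by linarith
    have h1ppos : (0:ℝ) < 1 - p := by linarith
    set ρ : ℝ := (n:ℝ) * p / (2 * (1 - p)) with hρ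
    have hρ0 : 0 ≤ ρ := by positivity
    have hρle : ρ ≤ 1/2 := by
      rw [hρ, div_le_iff₀ (by linarith)]
      nlinarith
    -- step inequality
    have hstep : ∀ j, 1 ≤ j → f (j+1) ≤ ρ * f j := by
      intro j hj
      by_cases hjn : j < n
      · have hchoose : 2 * (n.choose (j+1) : ℝ) ≤ (n:ℝ) * (n.choose j : ℝ) := by
          have h1 : n.choose (j+1) * (j+1) = n.choose j * (n - j) := Nat.choose_succ_right_eq n j
          have h2 : 2 * n.choose (j+1) ≤ n * n.choose j := by
            calc 2 * n.choose (j+1) ≤ (j+1) * n.choose (j+1) := by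
                  exact Nat.mul_le_mul_right _ (by omega)
              _ = n.choose j * (n - j) := by rw [mul_comm]; exact h1
              _ ≤ n * n.choose j := by
                  rw [mul_comm]; exact Nat.mul_le_mul_right _ (by omega)
          exact_mod_cast h2
        have hpow : (1 - p) ^ (n - j) = (1 - p) ^ (n - (j+1)) * (1 - p) := by
          rw [← pow_succ]
          congr 1
          omega
        have hρf : ρ * f j = ((n:ℝ) * (n.choose j : ℝ) / 2) * p ^ (j+1) * (1 - p) ^ (n - (j+1)) := by
          rw [hρ, hf]
          simp only []
          rw [hpow, pow_succ]
          field_simp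
        rw [hρf, hf]
        simp only []
        have hpp : 0 ≤ p ^ (j+1) * (1 - p) ^ (n - (j+1)) := by positivity
        calc (n.choose (j+1) : ℝ) * p ^ (j+1) * (1 - p) ^ (n - (j+1))
            = (n.choose (j+1) : ℝ) * (p ^ (j+1) * (1 - p) ^ (n - (j+1))) := by ring
          _ ≤ ((n:ℝ) * (n.choose j : ℝ) / 2) * (p ^ (j+1) * (1 - p) ^ (n - (j+1))) := by
              apply mul_le_mul_of_nonneg_right _ hpp
              linarith
          _ = ((n:ℝ) * (n.choose j : ℝ) / 2) * p ^ (j+1) * (1 - p) ^ (n - (j+1)) := by ring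
      · have : n.choose (j+1) = 0 := Nat.choose_eq_zero_of_lt (by omega)
        have hfz : f (j+1) = 0 := by rw [hf]; simp [this]
        rw [hfz]
        exact mul_nonneg hρ0 (hfnn j)
    have hiter : ∀ k, f (b + k) ≤ ρ ^ k * f b := by
      intro k
      induction k with
      | zero => simp
      | succ k ih =>
        have h1 : f (b + (k+1)) ≤ ρ * f (b + k) := by
          simpa [Nat.add_assoc] using hstep (b + k) (by omega)
        calc f (b + (k+1)) ≤ ρ * f (b + k) := h1
          _ ≤ ρ * (ρ ^ k * f b) := mul_le_mul_of_nonneg_left ih hρ0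
          _ = ρ ^ (k+1) * f b := by ring
    have hsumle : ∑ j ∈ Finset.Icc b n, f j ≤ (∑ k ∈ Finset.range (n + 1 - b), ρ ^ k) * f b := by
      rw [show Finset.Icc b n = Finset.Ico b (n+1) from rfl, Finset.sum_Ico_eq_sum_range,
        Finset.sum_mul]
      exact Finset.sum_le_sum fun k _ => hiter k
    have hgeom : (∑ k ∈ Finset.range (n + 1 - b), ρ ^ k) ≤ 1 + 2 * (n:ℝ) * p := by
      have hρne : ρ ≠ 1 := by linarith
      rw [geom_sum_eq hρne]
      rw [div_le_iff_of_neg (by linarith)]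
      have hρm : (0:ℝ) ≤ ρ ^ (n + 1 - b) := pow_nonneg hρ0 _
      have key : (1 + 2 * (n:ℝ) * p) * (1 - ρ) ≥ 1 := by
        rw [hρ, ge_iff_le, ← sub_nonneg]
        have : (1 + 2 * (n:ℝ) * p) * (1 - (n:ℝ) * p / (2 * (1 - p))) - 1
            = ((n:ℝ) * p * (3 - 4 * p - 2 * ((n:ℝ) * p))) / (2 * (1 - p)) := by
          field_simp
          ring
        rw [this]
        apply div_nonneg _ (by linarith)
        apply mul_nonneg hnp0
        nlinarith
      nlinarith
    calc ∑ j ∈ Finset.Icc b n, f j ≤ (∑ k ∈ Finset.range (n + 1 - b), ρ ^ k) * f b := hsumle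
      _ ≤ (1 + 2 * (n:ℝ) * p) * f b := mul_le_mul_of_nonneg_right hgeom (hfnn b)
end
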